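/- Suppose the virtual game is socially concave with weights λ_1,…,λ_n > 0: the function ρ ↦ Σ_{i=1}^n λ_i V_i(ρ) is concave on P, and for every i and every fixed ρ_i ∈ P_i the function ρ_{-i} ↦ V_i(ρ_i, ρ_{-i}) is convex on ∏_{j≠i} P_j. Let ρ^1,…,ρ^k ∈ P, let c_1,…,c_k ≥ 0 with Σ_ℓ c_ℓ = 1, and set ρ̄ = Σ_{ℓ=1}^k c_ℓ ρ^ℓ. Then for every θ ∈ P: Σ_{i=1}^n λ_i [V_i(θ_i, ρ̄_{-i}) − V_i(ρ̄)] ≤ Σ_{ℓ=1}^k c_ℓ Σ_{i=1}^n λ_i [V_i(θ_i, ρ^ℓ_{-i}) − V_i(ρ^ℓ)]. -/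

import Mathlib

open scoped BigOperators
open Finset

noncomputable section

/-- The probability simplex on a finite set `X`. -/
def probSimplex (X : Type*) [Fintype X] : Set (X → ℝ) :=
  {x | (∀ p, 0 ≤ x p) ∧ ∑ p, x p = 1}

/-- Payoff of a player with reward `ri` at a profile `ρ` in the virtual game. -/
def payoff {n : ℕ} {S A : Fin n → Type*} [∀ j, Fintype (S j)] [∀ j, Fintype (A j)]
    (ri : (∀ j, S j) → (∀ j, A j) → ℝ) (ρ : ∀ j, S j × A j → ℝ) : ℝ :=
  ∑ s : ∀ j, S j, ∑ a : ∀ j, A j, (∏ j, ρ j (s j, a j)) * ri s a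

lemma convexOn_finset_sum' {E : Type*} [AddCommGroup E] [Module ℝ E]
    {s : Set E} (hs : Convex ℝ s) {ι : Type*} (t : Finset ι) (f : ι → E → ℝ)
    (hf : ∀ i ∈ t, ConvexOn ℝ s (f i)) :
    ConvexOn ℝ s (fun x => ∑ i ∈ t, f i x) := by
  classical
  induction t using Finset.induction with
  | empty => simpa using convexOn_const 0 hs
  | @insert _ _ hni ih =>
    simp only [Finset.sum_insert hni]
    exact (hf _ (Finset.mem_insert_self _ _)).add
      (ih fun i hi => hf i (Finset.mem_insert_of_mem hi))

/-- in a socially concave virtual game, for any convex combination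
`ρ̄ = ∑_ℓ c_ℓ ρ^ℓ` of profiles in `P` and any `θ ∈ P`,
`∑_i λ_i [V_i(θ_i, ρ̄_{-i}) − V_i(ρ̄)] ≤ ∑_ℓ c_ℓ ∑_i λ_i [V_i(θ_i, ρ^ℓ_{-i}) − V_i(ρ^ℓ)]`. -/
theorem socially_concave_averaging_bound
    {n : ℕ} {S A : Fin n → Type*}
    [∀ j, Fintype (S j)] [∀ j, Nonempty (S j)]
    [∀ j, Fintype (A j)] [∀ j, Nonempty (A j)]
    (r : ∀ _ : Fin n, (∀ j, S j) → (∀ j, A j) → ℝ)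
    (P : ∀ i : Fin n, Set ((S i × A i) → ℝ))
    (hPne : ∀ i, (P i).Nonempty) (hPcpt : ∀ i, IsCompact (P i))
    (hPcvx : ∀ i, Convex ℝ (P i)) (hPsub : ∀ i, P i ⊆ probSimplex (S i × A i))
    (lam : Fin n → ℝ) (hlam : ∀ i, 0 < lam i)
    -- social concavity: ∑ λ_i V_i is concave on P
    (hconc : ConcaveOn ℝ {ρ : ∀ j, S j × A j → ℝ | ∀ j, ρ j ∈ P j}
      (fun ρ => ∑ i, lam i * payoff (r i) ρ))
    -- and for each i and fixed ρ_i ∈ P_i, V_i(ρ_i, ·) is convex in the others' play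
    (hconv : ∀ i : Fin n, ∀ ρi ∈ P i,
      ConvexOn ℝ {ρ : ∀ j, S j × A j → ℝ | ∀ j, ρ j ∈ P j}
        (fun ρ => payoff (r i) (Function.update ρ i ρi)))
    -- a convex combination of profiles in P
    (k : ℕ) (ρ : Fin k → ∀ j, S j × A j → ℝ)
    (hρ : ∀ ℓ j, ρ ℓ j ∈ P j)
    (c : Fin k → ℝ) (hc0 : ∀ ℓ, 0 ≤ c ℓ) (hc1 : ∑ ℓ, c ℓ = 1)
    (ρbar : ∀ j, S j × A j → ℝ) (hρbar : ρbar = ∑ ℓ, c ℓ • ρ ℓ) :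
    ∀ θ : ∀ j, S j × A j → ℝ, (∀ j, θ j ∈ P j) →
      ∑ i, lam i * (payoff (r i) (Function.update ρbar i (θ i)) - payoff (r i) ρbar) ≤
        ∑ ℓ, c ℓ * ∑ i, lam i *
          (payoff (r i) (Function.update (ρ ℓ) i (θ i)) - payoff (r i) (ρ ℓ)) := by
  intro θ hθ
  classical
  set Q : Set (∀ j, S j × A j → ℝ) := {ρ : ∀ j, S j × A j → ℝ | ∀ j, ρ j ∈ P j} with hQ
  have hQcvx : Convex ℝ Q := hconc.1
  -- convexity of g := ∑ i, lam i * V_i(θ_i, ·)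
  have hg : ConvexOn ℝ Q (fun ρ => ∑ i, lam i * payoff (r i) (Function.update ρ i (θ i))) := by
    apply convexOn_finset_sum' hQcvx
    intro i _
    have := (hconv i (θ i) (hθ i)).smul (le_of_lt (hlam i))
    simpa [smul_eq_mul] using this
  have hmem : ∀ ℓ ∈ Finset.univ (α := Fin k), ρ ℓ ∈ Q := fun ℓ _ j => hρ ℓ j
  have h0 : ∀ ℓ ∈ Finset.univ (α := Fin k), 0 ≤ c ℓ := fun ℓ _ => hc0 ℓ
  have hgle : (fun ρ => ∑ i, lam i * payoff (r i) (Function.update ρ i (θ i))) ρbar ≤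
      ∑ ℓ, c ℓ • (∑ i, lam i * payoff (r i) (Function.update (ρ ℓ) i (θ i))) := by
    rw [hρbar]
    exact hg.map_sum_le h0 hc1 hmem
  have hhle : ∑ ℓ, c ℓ • (∑ i, lam i * payoff (r i) (ρ ℓ)) ≤
      (fun ρ => ∑ i, lam i * payoff (r i) ρ) ρbar := by
    rw [hρbar]
    exact hconc.le_map_sum h0 hc1 hmem
  simp only [smul_eq_mul] at hgle hhle
  have key : ∑ i, lam i * payoff (r i) (Function.update ρbar i (θ i))
      - ∑ i, lam i * payoff (r i) ρbar ≤
      ∑ ℓ, c ℓ * (∑ i, lam i * payoff (r i) (Function.update (ρ ℓ) i (θ i)))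
      - ∑ ℓ, c ℓ * (∑ i, lam i * payoff (r i) (ρ ℓ)) := by
    exact sub_le_sub hgle hhle
  calc ∑ i, lam i * (payoff (r i) (Function.update ρbar i (θ i)) - payoff (r i) ρbar)
      = ∑ i, lam i * payoff (r i) (Function.update ρbar i (θ i))
        - ∑ i, lam i * payoff (r i) ρbar := by
        simp [mul_sub, Finset.sum_sub_distrib]
    _ ≤ ∑ ℓ, c ℓ * (∑ i, lam i * payoff (r i) (Function.update (ρ ℓ) i (θ i)))
        - ∑ ℓ, c ℓ * (∑ i, lam i * payoff (r i) (ρ ℓ)) := key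
    _ = ∑ ℓ, c ℓ * ∑ i, lam i *
          (payoff (r i) (Function.update (ρ ℓ) i (θ i)) - payoff (r i) (ρ ℓ)) := by
        simp [mul_sub, Finset.sum_sub_distrib]
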